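/- For every positive real z, the polynomial λ^k − z^{-1}(λ^{k−1} + ⋯ + λ + 1) (for integer k ≥ 2) has no repeated complex roots. -/

import Mathlib

open Polynomial

/-- For every positive real `z`, the polynomial `λ^k - z⁻¹ (λ^{k-1} + ⋯ + λ + 1)`
(with `k ≥ 2`) has no repeated complex roots. -/
theorem stmt_0 (k : ℕ) (hk : 2 ≤ k) (z : ℝ) (hz : 0 < z) :
    ((X ^ k - C ((z : ℂ))⁻¹ * ∑ i ∈ Finset.range k, X ^ i : Polynomial ℂ)).roots.Nodup := by
  obtain ⟨m, rfl⟩ : ∃ m, k = m + 2 := ⟨k - 2, by omega⟩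
  set c : ℂ := ((z : ℂ))⁻¹ with hc
  have hzC : (z : ℂ) ≠ 0 := by
    simp only [ne_eq, Complex.ofReal_eq_zero]
    exact ne_of_gt hz
  have hc0 : c ≠ 0 := inv_ne_zero hzC
  set S : Polynomial ℂ := ∑ i ∈ Finset.range (m + 2), X ^ i with hS
  set P : Polynomial ℂ := X ^ (m + 2) - C c * S with hP
  -- P is nonzero
  have hPne : P ≠ 0 := by
    intro h
    have hco : P.coeff (m + 2) = 1 := by
      have hSc : S.coeff (m + 2) = 0 := by
        rw [hS, Polynomial.finset_sum_coeff]
        apply Finset.sum_eq_zero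
        intro i hi
        rw [Polynomial.coeff_X_pow]
        simp only [Finset.mem_range] at hi
        rw [if_neg (by omega)]
      simp [hP, Polynomial.coeff_X_pow, hSc]
    rw [h] at hco
    simp at hco
  rw [Multiset.nodup_iff_count_le_one]
  intro x
  by_contra hcount
  push_neg at hcount
  rw [Polynomial.count_roots] at hcount
  obtain ⟨hr, hr'⟩ := (Polynomial.one_lt_rootMultiplicity_iff_isRoot hPne).mp hcount
  rw [Polynomial.IsRoot] at hr hr'
  by_cases hx1 : x = 1
  · -- x = 1 : direct contradiction with P(1)=0 and P'(1)=0
    subst hx1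
    have h1 : (1 : ℂ) - c * (m + 2) = 0 := by
      have h : P.eval 1 = 1 - c * (m + 2) := by
        simp [hP, hS, Polynomial.eval_finset_sum]
      rw [h] at hr; exact hr
    have hT : (∑ i ∈ Finset.range (m + 2), (i : ℂ)) * 2 = (m + 2) * (m + 1) := by
      have h := congrArg (fun n : ℕ => (n : ℂ)) (Finset.sum_range_id_mul_two (m + 2))
      push_cast at h
      convert h using 2
    have h2 : ((m : ℂ) + 2) - c * (∑ i ∈ Finset.range (m + 2), (i : ℂ)) = 0 := by
      have hdS : P.derivative.eval 1 = ((m : ℂ) + 2) - c * (∑ i ∈ Finset.range (m + 2), (i : ℂ)) := by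
        rw [hP, hS]
        simp [Polynomial.derivative_sum, Polynomial.derivative_X_pow, Polynomial.eval_finset_sum]
        ring
      rw [hdS] at hr'; exact hr'
    have hfin : ((m : ℂ) + 3) = 0 := by
      linear_combination 2 * h2 - ((m : ℂ) + 1) * h1 + c * hT
    have h3 : ((m + 3 : ℕ) : ℂ) = 0 := by push_cast; exact hfin
    exact absurd (Nat.cast_eq_zero.mp h3) (by omega)
  · -- x ≠ 1
    have hx0 : x ≠ 0 := by
      intro h
      subst h
      have h0 : P.eval 0 = -c := by
        simp [hP, hS, Polynomial.eval_finset_sum]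
      rw [h0] at hr
      exact hc0 (neg_eq_zero.mp hr)
    -- the auxiliary polynomial Q = (X-1) * P
    have hg : S * (X - 1) = X ^ (m + 2) - 1 := geom_sum_mul X (m + 2)
    have hQ : (X - 1) * P = X ^ (m + 3) - (1 + C c) * X ^ (m + 2) + C c := by
      rw [hP]
      linear_combination (-(C c)) * hg
    -- Q(x) = 0
    have hQx : x ^ (m + 3) - (1 + c) * x ^ (m + 2) + c = 0 := by
      have h := congrArg (Polynomial.eval x) hQ
      simp only [Polynomial.eval_mul, Polynomial.eval_sub, Polynomial.eval_add,
        Polynomial.eval_pow, Polynomial.eval_X, Polynomial.eval_one, Polynomial.eval_C] at h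
      rw [hr] at h
      rw [← h]
      ring
    -- Q'(x) = 0
    have hQ'x : ((m : ℂ) + 3) * x ^ (m + 2) - (1 + c) * ((m : ℂ) + 2) * x ^ (m + 1) = 0 := by
      have h := congrArg (fun p => Polynomial.eval x (Polynomial.derivative p)) hQ
      simp only [Polynomial.derivative_mul, Polynomial.derivative_sub, Polynomial.derivative_add,
        Polynomial.derivative_X, Polynomial.derivative_one, Polynomial.derivative_C,
        Polynomial.derivative_X_pow, Polynomial.eval_add, Polynomial.eval_sub, Polynomial.eval_mul,
        Polynomial.eval_one, Polynomial.eval_X, Polynomial.eval_pow, Polynomial.eval_C] at h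
      rw [hr, hr'] at h
      push_cast at h
      simp at h
      linear_combination -h
    -- so (m+3) x = (m+2)(1+c)
    have hxeq : ((m : ℂ) + 3) * x = ((m : ℂ) + 2) * (1 + c) := by
      have hfac : x ^ (m + 1) * (((m : ℂ) + 3) * x - ((m : ℂ) + 2) * (1 + c)) = 0 := by
        linear_combination hQ'x
      rcases mul_eq_zero.mp hfac with h | h
      · exact absurd (pow_eq_zero_iff (Nat.succ_ne_zero m) |>.mp h) hx0
      · linear_combination h
    -- key equation: x^(m+3) - (m+3) x + (m+2) = 0
    have hkey : x ^ (m + 3) - ((m : ℂ) + 3) * x + ((m : ℂ) + 2) = 0 := by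
      linear_combination (-((m : ℂ) + 2)) * hQx + (x ^ (m + 2) - 1) * hxeq
    -- x is the real number r
    set r : ℝ := (m + 2) * (1 + z⁻¹) / (m + 3) with hrdef
    have hm3 : ((m : ℂ) + 3) ≠ 0 := by
      have : ((m + 3 : ℕ) : ℂ) ≠ 0 := Nat.cast_ne_zero.mpr (by omega)
      push_cast at this
      exact this
    have hxr : x = (r : ℂ) := by
      rw [hrdef]
      push_cast
      rw [eq_div_iff (by exact_mod_cast hm3)]
      rw [hc] at hxeq
      linear_combination hxeq
    have hrpos : 0 < r := by
      have h1 : (0:ℝ) < 1 + z⁻¹ := by positivity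
      rw [hrdef]
      positivity
    have hr1 : r ≠ 1 := by
      intro h
      apply hx1
      rw [hxr, h, Complex.ofReal_one]
    -- real key equation
    have hkeyR : r ^ (m + 3) - ((m : ℝ) + 3) * r + ((m : ℝ) + 2) = 0 := by
      rw [hxr] at hkey
      have : (((r ^ (m + 3) - ((m : ℝ) + 3) * r + ((m : ℝ) + 2)) : ℝ) : ℂ) = 0 := by
        push_cast
        linear_combination hkey
      exact_mod_cast this
    -- strict Bernoulli inequality gives contradiction
    have hs : -1 ≤ r - 1 := by linarith
    have hs' : r - 1 ≠ 0 := sub_ne_zero.mpr hr1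
    have hp : (1 : ℝ) < ((m + 3 : ℕ) : ℝ) := by
      exact_mod_cast Nat.lt_of_lt_of_le (by norm_num) (by omega : 2 ≤ m + 3)
    have hB := one_add_mul_self_lt_rpow_one_add hs hs' hp
    rw [show (1 : ℝ) + (r - 1) = r by ring, Real.rpow_natCast] at hB
    push_cast at hB
    nlinarith [hB]
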